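/- Let g : ℝⁿ → ℝᵐ satisfy g(0) = 0, let g be differentiable on the closed ball B = {x : ‖x‖ ≤ ρ} with derivative L-Lipschitz on B in the operator norm (‖g'(x) − g'(x')‖ ≤ L‖x − x'‖ for x, x' ∈ B), and suppose there is μ₀ > 0 with ‖g'(0)ᵀh‖ ≥ μ₀‖h‖ for all h ∈ ℝᵐ. If ‖y‖ < μ₀²/(4L) and μ₀/(2L) ≤ ρ, then there exists x* with g(x*) = y and ‖x*‖ ≤ 2‖y‖/μ₀. -/

import Mathlib

set_option maxHeartbeats 1000000

open Metric ContinuousLinearMap Set Filter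
open scoped RealInnerProductSpace Topology

/-- solvability with the single-point condition `‖g'(0)ᵀh‖ ≥ μ₀‖h‖`. -/
theorem stmt4 {n m : ℕ} (ρ L μ₀ : ℝ) (hρ : 0 < ρ) (hL : 0 < L) (hμ₀ : 0 < μ₀)
    (g : EuclideanSpace ℝ (Fin n) → EuclideanSpace ℝ (Fin m))
    (g' : EuclideanSpace ℝ (Fin n) →
      (EuclideanSpace ℝ (Fin n) →L[ℝ] EuclideanSpace ℝ (Fin m)))
    (hg0 : g 0 = 0)
    (hdiff : ∀ x ∈ Metric.closedBall (0 : EuclideanSpace ℝ (Fin n)) ρ,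
      HasFDerivWithinAt g (g' x) (Metric.closedBall 0 ρ) x)
    (hLip : ∀ x ∈ Metric.closedBall (0 : EuclideanSpace ℝ (Fin n)) ρ,
      ∀ x' ∈ Metric.closedBall (0 : EuclideanSpace ℝ (Fin n)) ρ,
        ‖g' x - g' x'‖ ≤ L * ‖x - x'‖)
    (hμ0 : ∀ h : EuclideanSpace ℝ (Fin m),
      μ₀ * ‖h‖ ≤ ‖ContinuousLinearMap.adjoint (g' 0) h‖)
    (y : EuclideanSpace ℝ (Fin m))
    (hy : ‖y‖ < μ₀ ^ 2 / (4 * L)) (hr : μ₀ / (2 * L) ≤ ρ) :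
    ∃ x : EuclideanSpace ℝ (Fin n), g x = y ∧ ‖x‖ ≤ 2 * ‖y‖ / μ₀ := by
  set R : ℝ := μ₀ / (2 * L) with hR
  have hRpos : 0 < R := by positivity
  set B : Set (EuclideanSpace ℝ (Fin n)) := Metric.closedBall 0 R with hB
  have hBsub : B ⊆ Metric.closedBall 0 ρ := Metric.closedBall_subset_closedBall hr
  set φ : EuclideanSpace ℝ (Fin n) → ℝ := fun x => ‖g x - y‖ + μ₀ / 2 * ‖x‖ with hφ
  have hgc : ContinuousOn g B := fun x hx =>
    ((hdiff x (hBsub hx)).continuousWithinAt).mono hBsub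
  have hφc : ContinuousOn φ B := by
    apply ContinuousOn.add
    · exact (hgc.sub continuousOn_const).norm
    · exact continuousOn_const.mul continuous_norm.continuousOn
  obtain ⟨x₀, hx₀B, hmin⟩ := (isCompact_closedBall (0 : EuclideanSpace ℝ (Fin n)) R).exists_isMinOn
    ⟨0, Metric.mem_closedBall_self hRpos.le⟩ hφc
  have h0B : (0 : EuclideanSpace ℝ (Fin n)) ∈ B := Metric.mem_closedBall_self hRpos.le
  have hφ0 : ‖g x₀ - y‖ + μ₀ / 2 * ‖x₀‖ ≤ ‖y‖ := by
    have h := hmin h0B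
    simpa [φ, hg0] using h
  have hgnn : (0:ℝ) ≤ ‖g x₀ - y‖ := norm_nonneg _
  have hx₀n : ‖x₀‖ ≤ 2 * ‖y‖ / μ₀ := by
    rw [le_div_iff₀ hμ₀]
    nlinarith [hφ0]
  have hy' : ‖y‖ * (4 * L) < μ₀ ^ 2 := (lt_div_iff₀ (by positivity)).mp hy
  have hx₀lt : ‖x₀‖ < R := by
    apply lt_of_le_of_lt hx₀n
    rw [hR, div_lt_div_iff₀ hμ₀ (by positivity)]
    nlinarith [norm_nonneg y]
  -- x₀ is in the interior of the big ball
  have hx₀ρ : ‖x₀‖ < ρ := lt_of_lt_of_le hx₀lt hr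
  have hx₀mem : x₀ ∈ Metric.closedBall (0 : EuclideanSpace ℝ (Fin n)) ρ :=
    by simpa [Metric.mem_closedBall, dist_zero_right] using hx₀ρ.le
  have hball_nhds : Metric.closedBall (0 : EuclideanSpace ℝ (Fin n)) ρ ∈ 𝓝 x₀ := by
    apply mem_of_superset (Metric.ball_mem_nhds x₀ (show (0:ℝ) < ρ - ‖x₀‖ by linarith))
    intro z hz
    rw [Metric.mem_ball] at hz
    rw [Metric.mem_closedBall, dist_zero_right]
    have h := norm_sub_norm_le z x₀
    rw [← dist_eq_norm] at h
    linarith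
  have hDx₀ : HasFDerivAt g (g' x₀) x₀ := (hdiff x₀ hx₀mem).hasFDerivAt hball_nhds
  have hgy : g x₀ = y := by
    by_contra hw
    set w : EuclideanSpace ℝ (Fin m) := g x₀ - y with hwdef
    have hwne : w ≠ 0 := sub_ne_zero.mpr hw
    have hwpos : 0 < ‖w‖ := norm_pos_iff.mpr hwne
    set a : EuclideanSpace ℝ (Fin n) := ContinuousLinearMap.adjoint (g' x₀) w with ha
    set c : ℝ := ‖a‖ with hc
    -- lower bound on c
    have hclow : (μ₀ - L * ‖x₀‖) * ‖w‖ ≤ c := by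
      have h1 : μ₀ * ‖w‖ ≤ ‖ContinuousLinearMap.adjoint (g' 0) w‖ := hμ0 w
      have h2 : ‖ContinuousLinearMap.adjoint (g' 0) w - a‖ ≤ L * ‖x₀‖ * ‖w‖ := by
        have : ContinuousLinearMap.adjoint (g' 0) w - a
            = (ContinuousLinearMap.adjoint (g' 0) - ContinuousLinearMap.adjoint (g' x₀)) w := by
          simp [ha]
        rw [this]
        calc ‖(ContinuousLinearMap.adjoint (g' 0) - ContinuousLinearMap.adjoint (g' x₀)) w‖
            ≤ ‖ContinuousLinearMap.adjoint (g' 0) - ContinuousLinearMap.adjoint (g' x₀)‖ * ‖w‖ :=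
              le_opNorm _ _
        _ = ‖g' 0 - g' x₀‖ * ‖w‖ := by
              rw [← map_sub (ContinuousLinearMap.adjoint
                (𝕜 := ℝ) (E := EuclideanSpace ℝ (Fin n)) (F := EuclideanSpace ℝ (Fin m)))]
              rw [LinearIsometryEquiv.norm_map]
        _ ≤ L * ‖0 - x₀‖ * ‖w‖ := by
              have := hLip 0 (Metric.mem_closedBall_self hρ.le) x₀ hx₀mem
              nlinarith [norm_nonneg w]
        _ = L * ‖x₀‖ * ‖w‖ := by rw [zero_sub, norm_neg]
      have h3 : ‖ContinuousLinearMap.adjoint (g' 0) w‖ ≤ ‖ContinuousLinearMap.adjoint (g' 0) w - a‖ + ‖a‖ := by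
        simpa using norm_add_le (ContinuousLinearMap.adjoint (g' 0) w - a) a
      nlinarith
    have hLx₀ : L * ‖x₀‖ < μ₀ / 2 := by
      have : ‖x₀‖ < μ₀ / (2 * L) := hx₀lt
      rw [lt_div_iff₀ (by positivity)] at this
      nlinarith
    have hcbig : μ₀ / 2 * ‖w‖ < c := by nlinarith
    have hcpos : 0 < c := lt_of_le_of_lt (by positivity) hcbig
    set v : EuclideanSpace ℝ (Fin n) := -(c⁻¹ • a) with hv
    have hvnorm : ‖v‖ = 1 := by
      rw [hv, norm_neg, norm_smul, norm_inv, Real.norm_eq_abs, abs_of_pos hcpos, ← hc,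
        inv_mul_cancel₀ hcpos.ne']
    -- curve G and the functions F, Φ
    set G : ℝ → EuclideanSpace ℝ (Fin m) := fun t => g (x₀ + t • v) with hG
    have hline : HasDerivAt (fun t : ℝ => x₀ + t • v) v 0 := by
      simpa using ((hasDerivAt_id (0:ℝ)).smul_const v).const_add x₀
    have hGd : HasDerivAt G (g' x₀ v) 0 := by
      have h' : HasFDerivAt g (g' x₀) (x₀ + (0:ℝ) • v) := by simpa using hDx₀
      exact h'.comp_hasDerivAt 0 hline
    have hGy : HasDerivAt (fun t => G t - y) (g' x₀ v) 0 := hGd.sub_const y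
    have hG0 : G 0 - y = w := by simp [hG, hwdef]
    set F : ℝ → ℝ := fun t => ⟪G t - y, G t - y⟫ with hF
    have hFd : HasDerivAt F (2 * ⟪w, g' x₀ v⟫) 0 := by
      have := hGy.inner ℝ hGy
      rw [hG0] at this
      rw [show (2:ℝ) * ⟪w, g' x₀ v⟫ = ⟪w, g' x₀ v⟫ + ⟪g' x₀ v, w⟫ by
        rw [real_inner_comm (g' x₀ v) w]; ring]
      exact this
    have hinner : ⟪w, g' x₀ v⟫ = -c := by
      rw [← ContinuousLinearMap.adjoint_inner_left, ← ha, hv, inner_neg_right, inner_smul_right,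
        real_inner_self_eq_norm_sq, ← hc]
      field_simp
    set Φ : ℝ → ℝ := fun t => (‖w‖ - μ₀ / 2 * t) ^ 2 with hΦ
    have hΦd : HasDerivAt Φ (-(μ₀ * ‖w‖)) 0 := by
      have h1 : HasDerivAt (fun t : ℝ => ‖w‖ - μ₀ / 2 * t) (-(μ₀ / 2)) 0 := by
        simpa using ((hasDerivAt_id (0:ℝ)).const_mul (μ₀/2)).const_sub ‖w‖
      have := h1.pow 2
      rw [show -(μ₀ * ‖w‖) = ((2:ℕ):ℝ) * (‖w‖ - μ₀ / 2 * 0) ^ (2 - 1) * -(μ₀ / 2) by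
        norm_num; ring]
      exact this
    set D : ℝ := 2 * ⟪w, g' x₀ v⟫ - -(μ₀ * ‖w‖) with hD
    have hHd : HasDerivAt (fun t => F t - Φ t) D 0 := hFd.sub hΦd
    have hDneg : D < 0 := by
      rw [hD, hinner]
      nlinarith
    -- positivity of F - Φ on the right
    set ε : ℝ := min (R - ‖x₀‖) (2 * ‖w‖ / μ₀) with hε
    have hεpos : 0 < ε := lt_min (by linarith) (by positivity)
    have hpos : ∀ t ∈ Ioo (0:ℝ) ε, 0 ≤ F t - Φ t := by
      intro t ht
      obtain ⟨ht0, htε⟩ := ht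
      have htR : t ≤ R - ‖x₀‖ := le_trans htε.le (min_le_left _ _)
      have htw : t ≤ 2 * ‖w‖ / μ₀ := le_trans htε.le (min_le_right _ _)
      have hmem : x₀ + t • v ∈ B := by
        rw [hB, Metric.mem_closedBall, dist_zero_right]
        calc ‖x₀ + t • v‖ ≤ ‖x₀‖ + ‖t • v‖ := norm_add_le _ _
        _ = ‖x₀‖ + t := by rw [norm_smul, hvnorm, Real.norm_eq_abs, abs_of_pos ht0, mul_one]
        _ ≤ R := by linarith
      have hmin' : φ x₀ ≤ φ (x₀ + t • v) := hmin hmem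
      have hnorms : ‖x₀ + t • v‖ ≤ ‖x₀‖ + t := by
        calc ‖x₀ + t • v‖ ≤ ‖x₀‖ + ‖t • v‖ := norm_add_le _ _
        _ = ‖x₀‖ + t := by rw [norm_smul, hvnorm, Real.norm_eq_abs, abs_of_pos ht0, mul_one]
      have hkey : ‖w‖ - μ₀ / 2 * t ≤ ‖G t - y‖ := by
        have : ‖w‖ + μ₀ / 2 * ‖x₀‖ ≤ ‖G t - y‖ + μ₀ / 2 * ‖x₀ + t • v‖ := hmin'
        nlinarith
      have hrhs_nn : 0 ≤ ‖w‖ - μ₀ / 2 * t := by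
        rw [le_div_iff₀ hμ₀] at htw
        nlinarith
      have : Φ t ≤ ‖G t - y‖ ^ 2 := by
        rw [hΦ]
        exact pow_le_pow_left₀ hrhs_nn hkey 2
      have hFt : F t = ‖G t - y‖ ^ 2 := real_inner_self_eq_norm_sq _
      linarith [this, hFt.ge, hFt.le]
    -- slope argument
    have hH0 : F 0 - Φ 0 = 0 := by
      have : F 0 = ‖w‖ ^ 2 := by
        show ⟪G 0 - y, G 0 - y⟫ = ‖w‖ ^ 2
        rw [hG0]; exact real_inner_self_eq_norm_sq _
      simp [this, hΦ]
    have hslope : Tendsto (slope (fun t => F t - Φ t) 0) (𝓝[>] 0) (𝓝 D) :=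
      (hasDerivAt_iff_tendsto_slope.mp hHd).mono_left
        (nhdsWithin_mono 0 (fun t ht => ne_of_gt ht))
    have hDnn : 0 ≤ D := by
      refine ge_of_tendsto hslope ?_
      filter_upwards [Ioo_mem_nhdsGT hεpos] with t ht
      have := hpos t ht
      rw [slope_def_field]
      rw [hH0]
      have ht0 : 0 < t := ht.1
      simp only [sub_zero]
      positivity
    linarith
  exact ⟨x₀, hgy, hx₀n⟩
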